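/- Let A be a bialgebra over a commutative ring k such that every finitely generated projective k-module is free, and assume A is finitely generated projective over k. If A admits a right antipode S (i.e. Σ a₍₁₎ S(a₍₂₎) = ε(a) 1 for all a), then S is also a left antipode (i.e. Σ S(a₍₁₎) a₍₂₎ = ε(a) 1), so A is a Hopf algebra. -/

import Mathlib

open TensorProduct Coalgebra

universe u

section ConvAux

variable {k A : Type u} [CommRing k] [Ring A] [Bialgebra k A]

/-- The convolution product on `End_k(A)`. -/
noncomputable def convAux (f g : A →ₗ[k] A) : A →ₗ[k] A :=
  LinearMap.mul' k A ∘ₗ TensorProduct.map f g ∘ₗ comul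

/-- The convolution unit `η ∘ ε`. -/
noncomputable def cunitAux : A →ₗ[k] A :=
  Algebra.linearMap k A ∘ₗ counit

lemma convAux_apply_repr (f g : A →ₗ[k] A) {a : A} {ι : Type*} (r : Coalgebra.Repr k a ι) :
    convAux f g a = ∑ i ∈ r.index, f (r.left i) * g (r.right i) := by
  simp [convAux, ← r.eq, map_sum]

lemma cunitAux_apply (a : A) : cunitAux (k := k) a = counit (R := k) a • (1 : A) := by
  simp [cunitAux, Algebra.algebraMap_eq_smul_one]

lemma cunitAux_convAux (f : A →ₗ[k] A) : convAux cunitAux f = f := by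
  ext a
  set r := ℛ k a
  rw [convAux_apply_repr _ _ r]
  simp only [cunitAux_apply, smul_mul_assoc, one_mul]
  have h := congrArg (TensorProduct.lid k A)
    (sum_counit_tmul_map_eq (R := k) f a (repr := r))
  simpa only [map_sum, TensorProduct.lid_tmul, one_smul] using h

lemma convAux_cunitAux (f : A →ₗ[k] A) : convAux f cunitAux = f := by
  ext a
  set r := ℛ k a
  rw [convAux_apply_repr _ _ r]
  simp only [cunitAux_apply, mul_smul_comm, mul_one]
  have h := congrArg (TensorProduct.rid k A)
    (sum_map_tmul_counit_eq (R := k) f a (repr := r))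
  simpa only [map_sum, TensorProduct.rid_tmul, one_smul] using h

lemma convAux_assoc (f g h : A →ₗ[k] A) :
    convAux (convAux f g) h = convAux f (convAux g h) := by
  ext a
  set r := ℛ k a
  set a₁ : (i : A × A) → Coalgebra.Repr k (r.left i) (A × A) := fun i => ℛ k (r.left i)
  set a₂ : (i : A × A) → Coalgebra.Repr k (r.right i) (A × A) := fun i => ℛ k (r.right i)
  have key := congrArg (LinearMap.mul' k A ∘ₗ (LinearMap.mul' k A).lTensor A)
    (sum_map_tmul_tmul_eq (R := k) f g h a (repr := r) (a₁ := a₁) (a₂ := a₂))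
  simp only [map_sum, LinearMap.comp_apply, LinearMap.lTensor_tmul,
    LinearMap.mul'_apply] at key
  rw [convAux_apply_repr _ _ r, convAux_apply_repr _ _ r]
  calc ∑ i ∈ r.index, convAux f g (r.left i) * h (r.right i)
      = ∑ i ∈ r.index, ∑ j ∈ (a₁ i).index,
          f ((a₁ i).left j) * (g ((a₁ i).right j) * h (r.right i)) := by
        refine Finset.sum_congr rfl fun i _ => ?_
        rw [convAux_apply_repr _ _ (a₁ i), Finset.sum_mul]
        exact Finset.sum_congr rfl fun j _ => mul_assoc _ _ _
    _ = ∑ i ∈ r.index, ∑ j ∈ (a₂ i).index,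
          f (r.left i) * (g ((a₂ i).left j) * h ((a₂ i).right j)) := key.symm
    _ = ∑ i ∈ r.index, f (r.left i) * convAux g h (r.right i) := by
        refine Finset.sum_congr rfl fun i _ => ?_
        rw [convAux_apply_repr _ _ (a₂ i), Finset.mul_sum]

lemma convAux_add_right (f g h : A →ₗ[k] A) :
    convAux f (g + h) = convAux f g + convAux f h := by
  ext a
  set r := ℛ k a
  rw [LinearMap.add_apply, convAux_apply_repr _ _ r, convAux_apply_repr _ _ r,
    convAux_apply_repr _ _ r, ← Finset.sum_add_distrib]
  simp [mul_add]

lemma convAux_smul_right (c : k) (f g : A →ₗ[k] A) :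
    convAux f (c • g) = c • convAux f g := by
  ext a
  set r := ℛ k a
  rw [LinearMap.smul_apply, convAux_apply_repr _ _ r, convAux_apply_repr _ _ r,
    Finset.smul_sum]
  simp [mul_smul_comm]

end ConvAux

/-- Over a commutative ring `k` for which every finitely generated projective module is
free, any right antipode on a finitely generated projective bialgebra `A` is also a left
antipode, so `A` is a Hopf algebra. -/
theorem right_antipode_is_left_antipode {k A : Type u} [CommRing k] [Ring A]
    [Bialgebra k A]
    (hfree : ∀ (M : Type u) [AddCommGroup M] [Module k M],
      Module.Finite k M → Module.Projective k M → Module.Free k M)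
    [Module.Finite k A] [Module.Projective k A]
    (S : A →ₗ[k] A)
    (hS : ∀ a : A, LinearMap.mul' k A (TensorProduct.map LinearMap.id S (comul (R := k) a)) =
      counit (R := k) a • (1 : A)) :
    ∀ a : A, LinearMap.mul' k A (TensorProduct.map S LinearMap.id (comul (R := k) a)) =
      counit (R := k) a • (1 : A) := by
  haveI : Module.Free k A := hfree A ‹_› ‹_›
  -- `id ⋆ S = cunit` as linear maps
  have h1 : convAux (LinearMap.id : A →ₗ[k] A) S = cunitAux := by
    ext a
    rw [cunitAux_apply]
    exact hS a
  -- left convolution by `id` as a linear endomorphism of `End_k(A)`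
  let T : (A →ₗ[k] A) →ₗ[k] (A →ₗ[k] A) :=
    { toFun := fun f => convAux LinearMap.id f
      map_add' := fun f g => convAux_add_right _ f g
      map_smul' := fun c f => convAux_smul_right c _ f }
  have hT : ∀ f, T f = convAux LinearMap.id f := fun _ => rfl
  have hsurj : Function.Surjective T := fun z =>
    ⟨convAux S z, by rw [hT, ← convAux_assoc, h1, cunitAux_convAux]⟩
  have hinj : Function.Injective T :=
    OrzechProperty.injective_of_surjective_endomorphism T hsurj
  have key : convAux S (LinearMap.id : A →ₗ[k] A) = cunitAux := by
    apply hinj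
    rw [hT, hT, ← convAux_assoc, h1, cunitAux_convAux, convAux_cunitAux]
  intro a
  have := congrFun (congrArg (DFunLike.coe) key) a
  rw [cunitAux_apply] at this
  exact this
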